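/- Let F be a field of characteristic 0 with a nontrivial absolute value, let (εᵢ)_{i∈ℕ} be positive reals, and let (aᵢ)_{i∈ℕ} be any sequence in F. Then there exists a sequence (bᵢ)_{i∈ℕ} in F with |bᵢ − aᵢ| < εᵢ for all i such that {bᵢ : i ∈ ℕ} is a B_h-set. -/

import Mathlib

open scoped Classical

section BhAux

variable {F : Type*} [Field F]

/-- Sums of `h`-tuples with entries in `P`. -/
noncomputable def padSums (h : ℕ) (P : Finset F) : Finset F :=
  (Fintype.piFinset fun _ : Fin h => P).image fun f => ∑ i, f i

/-- The finite set of "bad" values to avoid at each step of the construction. -/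
noncomputable def badSet (h : ℕ) (prev : Finset F) : Finset F :=
  (Finset.Icc 1 h).biUnion fun k =>
    ((padSums h (insert 0 prev)) ×ˢ (padSums h (insert 0 prev))).image
      fun p => (p.2 - p.1) / (k : F)

lemma exists_pad {P : Finset F} (h0 : (0:F) ∈ P) :
    ∀ (h : ℕ) (M : Multiset F), (∀ x ∈ M, x ∈ P) → M.card ≤ h →
      ∃ f : Fin h → F, (∀ i, f i ∈ P) ∧ ∑ i, f i = M.sum := by
  intro h
  induction h with
  | zero =>
    intro M hM hc
    have : M = 0 := Multiset.card_eq_zero.mp (Nat.le_zero.mp hc)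
    subst this
    exact ⟨fun i => i.elim0, fun i => i.elim0, by simp⟩
  | succ n ih =>
    intro M hM hc
    rcases Multiset.empty_or_exists_mem M with h0' | ⟨x, hx⟩
    · subst h0'
      exact ⟨fun _ => 0, fun _ => h0, by simp⟩
    · have hM' : ∀ y ∈ M.erase x, y ∈ P := fun y hy => hM y (Multiset.mem_of_mem_erase hy)
      have hc' : (M.erase x).card ≤ n := by
        have h1 : 0 < M.card := Multiset.card_pos.mpr (fun h => by simp [h] at hx)
        have := Multiset.card_erase_of_mem hx
        have h2 : M.card.pred + 1 = M.card := Nat.succ_pred_eq_of_pos h1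
        omega
      obtain ⟨f', hf', hsum⟩ := ih (M.erase x) hM' hc'
      refine ⟨Fin.cons x f', ?_, ?_⟩
      · intro i
        refine Fin.cases ?_ ?_ i
        · exact hM x hx
        · exact fun j => hf' j
      · rw [Fin.sum_cons, hsum, ← Multiset.sum_cons, Multiset.cons_erase hx]

lemma sum_mem_padSums {P : Finset F} (h0 : (0:F) ∈ P) (h : ℕ) (M : Multiset F)
    (hM : ∀ x ∈ M, x ∈ P) (hc : M.card ≤ h) : M.sum ∈ padSums h P := by
  obtain ⟨f, hf, hsum⟩ := exists_pad h0 h M hM hc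
  exact Finset.mem_image.mpr ⟨f, Fintype.mem_piFinset.mpr hf, hsum⟩

lemma mem_badSet {h k : ℕ} (hk1 : 1 ≤ k) (hkh : k ≤ h) {prev : Finset F} {S T : F}
    (hS : S ∈ padSums h (insert 0 prev)) (hT : T ∈ padSums h (insert 0 prev)) :
    (T - S) / (k : F) ∈ badSet h prev := by
  refine Finset.mem_biUnion.mpr ⟨k, Finset.mem_Icc.mpr ⟨hk1, hkh⟩, ?_⟩
  exact Finset.mem_image.mpr ⟨(S, T), Finset.mem_product.mpr ⟨hS, hT⟩, rfl⟩

lemma exists_avoid (v : AbsoluteValue F ℝ) (hv : ∃ x : F, x ≠ 0 ∧ v x ≠ 1)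
    (c : F) {r : ℝ} (hr : 0 < r) (S : Finset F) :
    ∃ x : F, v (x - c) < r ∧ x ∉ S := by
  obtain ⟨x, hx0, hx1⟩ := hv
  have hxpos : 0 < v x := v.pos hx0
  obtain ⟨y, hy0, hy1⟩ : ∃ y : F, 0 < v y ∧ v y < 1 := by
    rcases lt_or_gt_of_ne hx1 with hlt | hgt
    · exact ⟨x, hxpos, hlt⟩
    · have hinv : v x⁻¹ = (v x)⁻¹ := map_inv₀ v x
      refine ⟨x⁻¹, by rw [hinv]; positivity, ?_⟩
      rw [hinv]
      exact inv_lt_one_of_one_lt₀ hgt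
  obtain ⟨K, hK⟩ := exists_pow_lt_of_lt_one hr hy1
  have hinj : Function.Injective fun k : ℕ => c + y ^ (K + k) := by
    intro k₁ k₂ hk
    have hy' : y ^ (K + k₁) = y ^ (K + k₂) := add_left_cancel hk
    have hvy : (v y) ^ (K + k₁) = (v y) ^ (K + k₂) := by
      rw [← v.map_pow, ← v.map_pow, hy']
    have := (pow_right_strictAnti₀ hy0 hy1).injective hvy
    omega
  have hmem : ∀ k : ℕ, (fun k : ℕ => c + y ^ (K + k)) k ∈ {x : F | v (x - c) < r} := by
    intro k
    simp only [Set.mem_setOf_eq, add_sub_cancel_left, v.map_pow]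
    calc (v y) ^ (K + k) ≤ (v y) ^ K := pow_le_pow_of_le_one hy0.le hy1.le (by omega)
      _ < r := hK
  have hinf : {x : F | v (x - c) < r}.Infinite :=
    Set.infinite_of_injective_forall_mem hinj hmem
  obtain ⟨z, hz1, hz2⟩ := hinf.exists_notMem_finset S
  exact ⟨z, hz1, hz2⟩

/-- The finite prefixes of the perturbed sequence. -/
noncomputable def blist (h : ℕ) (pick : ℕ → Finset F → F) : ℕ → List F
  | 0 => []
  | n + 1 => blist h pick n ++ [pick n (badSet h (blist h pick n).toFinset)]

/-- The perturbed sequence. -/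
noncomputable def bseq (h : ℕ) (pick : ℕ → Finset F → F) (n : ℕ) : F :=
  pick n (badSet h (blist h pick n).toFinset)

lemma blist_eq (h : ℕ) (pick : ℕ → Finset F → F) :
    ∀ n, blist h pick n = (List.range n).map (bseq h pick) := by
  intro n
  induction n with
  | zero => simp [blist]
  | succ n ih => rw [blist, List.range_succ, List.map_append, ← ih]; rfl

lemma bseq_eq (h : ℕ) (pick : ℕ → Finset F → F) (n : ℕ) :
    bseq h pick n = pick n (badSet h ((Finset.range n).image (bseq h pick))) := by
  have key : (List.map (bseq h pick) (List.range n)).toFinset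
      = (Finset.range n).image (bseq h pick) := by
    ext x; simp
  rw [bseq, blist_eq, key]

end BhAux

/-- Perturbation theorem for B_h-sets: any sequence in a characteristic-0 field with a
nontrivial absolute value can be ε-perturbed to a B_h-set. -/
theorem perturbation_Bh (F : Type*) [Field F] [CharZero F] (v : AbsoluteValue F ℝ)
    (hv : ∃ x : F, x ≠ 0 ∧ v x ≠ 1)
    (h : ℕ) (hh : 1 ≤ h) (ε : ℕ → ℝ) (hε : ∀ i, 0 < ε i) (a : ℕ → F) :
    ∃ b : ℕ → F, (∀ i, v (b i - a i) < ε i) ∧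
      ∀ f g : Fin h → F, (∀ i, f i ∈ Set.range b) → (∀ i, g i ∈ Set.range b) →
        ∑ i, f i = ∑ i, g i → ∃ σ : Equiv.Perm (Fin h), f = g ∘ σ := by
  classical
  have avoid : ∀ (n : ℕ) (S : Finset F), ∃ x : F, v (x - a n) < ε n ∧ x ∉ S :=
    fun n S => exists_avoid v hv (a n) (hε n) S
  choose pick hpick1 hpick2 using avoid
  set b : ℕ → F := bseq h pick with hbdef
  have hball : ∀ n, v (b n - a n) < ε n := by
    intro n
    rw [hbdef, bseq_eq]
    exact hpick1 _ _
  have hbad : ∀ n, b n ∉ badSet h ((Finset.range n).image b) := by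
    intro n
    rw [hbdef, bseq_eq]
    exact hpick2 _ _
  -- the key combinatorial property
  have key : ∀ n (s t : Multiset ℕ), (∀ i ∈ s, i < n) → (∀ i ∈ t, i < n) →
      s.card = t.card → s.card ≤ h →
      (s.map b).sum = (t.map b).sum → s = t := by
    intro n
    induction n with
    | zero =>
      intro s t hs ht _ _ _
      have hs0 : s = 0 := Multiset.eq_zero_of_forall_notMem fun i hi =>
        Nat.not_lt_zero i (hs i hi)
      have ht0 : t = 0 := Multiset.eq_zero_of_forall_notMem fun i hi =>
        Nat.not_lt_zero i (ht i hi)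
      rw [hs0, ht0]
    | succ n ih =>
      have claim : ∀ s t : Multiset ℕ, (∀ i ∈ s, i < n + 1) → (∀ i ∈ t, i < n + 1) →
          s.card = t.card → s.card ≤ h → (s.map b).sum = (t.map b).sum →
          t.count n ≤ s.count n → s = t := by
        intro s t hs ht hcard hle hsum hcnt
        set k := s.count n with hk
        set l := t.count n with hl
        set s₀ := s.filter (· ≠ n) with hs₀def
        set t₀ := t.filter (· ≠ n) with ht₀def
        have hsdec : s₀ + Multiset.replicate k n = s := by
          rw [hs₀def, hk]
          have h1 : s.filter (· = n) = Multiset.replicate (s.count n) n :=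
            Multiset.filter_eq' s n
          have h2 := Multiset.filter_add_not (· ≠ n) s
          have h3 : s.filter (fun x => ¬ x ≠ n) = s.filter (· = n) := by
            apply Multiset.filter_congr
            intro x _
            simp
          rw [h3, h1] at h2
          exact h2
        have htdec : t₀ + Multiset.replicate l n = t := by
          rw [ht₀def, hl]
          have h1 : t.filter (· = n) = Multiset.replicate (t.count n) n :=
            Multiset.filter_eq' t n
          have h2 := Multiset.filter_add_not (· ≠ n) t
          have h3 : t.filter (fun x => ¬ x ≠ n) = t.filter (· = n) := by
            apply Multiset.filter_congr
            intro x _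
            simp
          rw [h3, h1] at h2
          exact h2
        have hs₀lt : ∀ i ∈ s₀, i < n := by
          intro i hi
          rw [hs₀def] at hi
          have h1 := Multiset.of_mem_filter hi
          have h2 := hs i (Multiset.mem_of_mem_filter hi)
          omega
        have ht₀lt : ∀ i ∈ t₀, i < n := by
          intro i hi
          rw [ht₀def] at hi
          have h1 := Multiset.of_mem_filter hi
          have h2 := ht i (Multiset.mem_of_mem_filter hi)
          omega
        have hcards : s₀.card + k = s.card := by
          rw [← hsdec, Multiset.card_add, Multiset.card_replicate]
        have hcardt : t₀.card + l = t.card := by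
          rw [← htdec, Multiset.card_add, Multiset.card_replicate]
        have hsum' : (s₀.map b).sum + k • b n = (t₀.map b).sum + l • b n := by
          rw [← hsdec, ← htdec] at hsum
          simpa [Multiset.map_add, Multiset.sum_add, Multiset.map_replicate,
            Multiset.sum_replicate] using hsum
        rcases eq_or_lt_of_le hcnt with heq | hlt
        · -- equal counts: cancel and use IH
          rw [← heq] at hsum'
          have hST : (s₀.map b).sum = (t₀.map b).sum := by
            exact add_right_cancel hsum'
          have hc1 : s₀.card = t₀.card := by omega
          have hc2 : s₀.card ≤ h := by omega
          have := ih s₀ t₀ hs₀lt ht₀lt hc1 hc2 hST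
          rw [← hsdec, ← htdec, this, heq]
        · -- strictly more copies of n on the left: contradiction with badSet avoidance
          exfalso
          set d := k - l with hd
          have hd1 : 1 ≤ d := by omega
          have hdh : d ≤ h := by
            have := Multiset.count_le_card n s
            omega
          have hkd : k = l + d := by omega
          have hmul : (d : F) * b n = (t₀.map b).sum - (s₀.map b).sum := by
            have h' := hsum'
            rw [hkd] at h'
            simp only [nsmul_eq_mul] at h'
            push_cast at h'
            linear_combination h'
          have hdne : (d : F) ≠ 0 := Nat.cast_ne_zero.mpr (by omega)
          have hbn : b n = ((t₀.map b).sum - (s₀.map b).sum) / (d : F) := by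
            field_simp at hmul ⊢
            linear_combination hmul
          set prev := (Finset.range n).image b with hprev
          have hSmem : (s₀.map b).sum ∈ padSums h (insert 0 prev) := by
            apply sum_mem_padSums (Finset.mem_insert_self 0 prev) h
            · intro x hx
              obtain ⟨i, hi, rfl⟩ := Multiset.mem_map.mp hx
              exact Finset.mem_insert_of_mem
                (Finset.mem_image.mpr ⟨i, Finset.mem_range.mpr (hs₀lt i hi), rfl⟩)
            · rw [Multiset.card_map]
              omega
          have hTmem : (t₀.map b).sum ∈ padSums h (insert 0 prev) := by
            apply sum_mem_padSums (Finset.mem_insert_self 0 prev) h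
            · intro x hx
              obtain ⟨i, hi, rfl⟩ := Multiset.mem_map.mp hx
              exact Finset.mem_insert_of_mem
                (Finset.mem_image.mpr ⟨i, Finset.mem_range.mpr (ht₀lt i hi), rfl⟩)
            · rw [Multiset.card_map]
              omega
          have : b n ∈ badSet h prev := by
            rw [hbn]
            exact mem_badSet hd1 hdh hSmem hTmem
          exact hbad n this
      intro s t hs ht hcard hle hsum
      rcases le_total (t.count n) (s.count n) with H | H
      · exact claim s t hs ht hcard hle hsum H
      · exact (claim t s ht hs hcard.symm (hcard ▸ hle) hsum.symm H).symm
  refine ⟨b, hball, ?_⟩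
  intro f g hf hg hsum
  choose φ hφ using fun i => hf i
  choose ψ hψ using fun i => hg i
  set N := (Finset.univ.sup φ ⊔ Finset.univ.sup ψ) + 1 with hN
  set s : Multiset ℕ := (List.ofFn φ : Multiset ℕ) with hs
  set t : Multiset ℕ := (List.ofFn ψ : Multiset ℕ) with ht
  have hsb : ∀ i ∈ s, i < N := by
    intro i hi
    rw [hs] at hi
    obtain ⟨j, rfl⟩ := List.mem_ofFn.mp hi
    have : φ j ≤ Finset.univ.sup φ := Finset.le_sup (Finset.mem_univ j)
    have : φ j ≤ Finset.univ.sup φ ⊔ Finset.univ.sup ψ := le_trans this le_sup_left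
    omega
  have htb : ∀ i ∈ t, i < N := by
    intro i hi
    rw [ht] at hi
    obtain ⟨j, rfl⟩ := List.mem_ofFn.mp hi
    have : ψ j ≤ Finset.univ.sup ψ := Finset.le_sup (Finset.mem_univ j)
    have : ψ j ≤ Finset.univ.sup φ ⊔ Finset.univ.sup ψ := le_trans this le_sup_right
    omega
  have hcard : s.card = t.card := by simp [hs, ht]
  have hcardh : s.card ≤ h := by simp [hs]
  have hsums : (s.map b).sum = (t.map b).sum := by
    have h1 : (s.map b).sum = ∑ i, b (φ i) := by
      simp [hs, List.map_ofFn, List.sum_ofFn, Function.comp]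
    have h2 : (t.map b).sum = ∑ i, b (ψ i) := by
      simp [ht, List.map_ofFn, List.sum_ofFn, Function.comp]
    rw [h1, h2]
    calc ∑ i, b (φ i) = ∑ i, f i := Finset.sum_congr rfl fun i _ => hφ i
      _ = ∑ i, g i := hsum
      _ = ∑ i, b (ψ i) := (Finset.sum_congr rfl fun i _ => hψ i).symm
  have hst : s = t := key N s t hsb htb hcard hcardh hsums
  have hperm : List.Perm (List.ofFn φ) (List.ofFn ψ) := by
    rw [hs, ht] at hst
    exact Multiset.coe_eq_coe.mp hst
  set σφ := Tuple.sort φ with hσφ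
  set σψ := Tuple.sort ψ with hσψ
  have hps : List.Perm (List.ofFn (φ ∘ σφ)) (List.ofFn (ψ ∘ σψ)) :=
    (σφ.ofFn_comp_perm φ).trans (hperm.trans (σψ.ofFn_comp_perm ψ).symm)
  have hlists : List.ofFn (φ ∘ σφ) = List.ofFn (ψ ∘ σψ) :=
    List.Perm.eq_of_pairwise' (r := (· ≤ ·)) (Tuple.monotone_sort φ).sortedLE_ofFn.pairwise
      (Tuple.monotone_sort ψ).sortedLE_ofFn.pairwise hps
  have hfun : φ ∘ σφ = ψ ∘ σψ := List.ofFn_injective hlists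
  refine ⟨σφ.symm.trans σψ, ?_⟩
  funext i
  have h1 : φ i = (φ ∘ σφ) (σφ.symm i) := by simp
  have h2 : (ψ ∘ σψ) (σφ.symm i) = ψ ((σφ.symm.trans σψ) i) := rfl
  calc f i = b (φ i) := (hφ i).symm
    _ = b ((φ ∘ σφ) (σφ.symm i)) := by rw [← h1]
    _ = b ((ψ ∘ σψ) (σφ.symm i)) := by rw [hfun]
    _ = b (ψ ((σφ.symm.trans σψ) i)) := by rw [h2]
    _ = g ((σφ.symm.trans σψ) i) := hψ _
    _ = (g ∘ (σφ.symm.trans σψ)) i := rfl
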